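/- Let μ : M → P be a crossed module with A = ker μ and Q = coker μ, and let φ : A → B be a morphism of Q-modules (B an abelian group with Q-action). Set M' = (B × M)/C where C = {(φ(a), i(a)⁻¹) : a ∈ A} (i : A → M the inclusion), with μ' : M' → P induced by (b,m) ↦ μ(m) and P acting on M' by (b,m)^p = (b^{[p]}, m^p). Then C is a normal subgroup of B × M, (M', P, μ') is a crossed module, ker μ' ≅ B, coker μ' ≅ Q, and φ' : M → M', m ↦ [(1, m)], together with the identity on P, is a morphism of crossed modules restricting to φ on kernels. -/

import Mathlib

universe u v

/-- A crossed module `(M, P, μ)`: groups `M`, `P`, a homomorphism `μ : M → P`, and a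
right action of `P` on `M` by automorphisms (written `act p m` for `m ^ p`) with
CM1: `μ (m ^ p) = p⁻¹ * μ m * p` and CM2: `n ^ (μ m) = m⁻¹ * n * m`. -/
structure CrossedModule where
  M : Type u
  P : Type v
  [grpM : Group M]
  [grpP : Group P]
  μ : M →* P
  act : P → M →* M
  act_one : ∀ m, act 1 m = m
  act_mul : ∀ (p q : P) (m : M), act (p * q) m = act q (act p m)
  cm1 : ∀ (m : M) (p : P), μ (act p m) = p⁻¹ * μ m * p
  cm2 : ∀ m n : M, act (μ m) n = m⁻¹ * n * m

attribute [instance] CrossedModule.grpM CrossedModule.grpP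

/-- The action of a crossed module preserves the kernel of its boundary. -/
lemma CrossedModule.act_ker (X : CrossedModule) (p : X.P) {a : X.M}
    (ha : a ∈ X.μ.ker) : X.act p a ∈ X.μ.ker := by
  rw [MonoidHom.mem_ker] at ha ⊢
  rw [X.cm1, ha]
  group

/-- Elements of the kernel are central in `M`. -/
lemma CrossedModule.ker_central (X : CrossedModule) {a : X.M} (ha : a ∈ X.μ.ker)
    (m : X.M) : m * a = a * m := by
  have h := X.cm2 a m
  rw [MonoidHom.mem_ker] at ha
  rw [ha, X.act_one] at h
  calc m * a = a * (a⁻¹ * m * a) := by group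
  _ = a * m := by rw [← h]

/-- Pushout of a crossed module along a morphism `φ : A → B` of `Q`-modules,
where `A = ker μ` and `Q = coker μ`.  With `C = {(φ a, a⁻¹) : a ∈ A} ⊆ B × M`
and `M' = (B × M)/C`, with `μ'` induced by `(b, m) ↦ μ m` and the `P`-action by
`(b, m) ^ p = (b ^ [p], m ^ p)`:  `C` is a normal subgroup of `B × M`,
`(M', P, μ')` is a crossed module, `ker μ' ≅ B`, `coker μ' ≅ Q`, and
`φ' : m ↦ [(1, m)]` together with `id : P → P` is a morphism of crossed modules
restricting to `φ` on the kernels.  All statements about `M'` are expressed in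
`B × M` modulo `C`. -/

theorem pushout_crossed_module (X : CrossedModule) (B : Type*) [CommGroup B]
    (actB : X.P ⧸ X.μ.range → B →* B)
    (actB_one : ∀ b : B, actB (QuotientGroup.mk 1) b = b)
    (actB_mul : ∀ (p q : X.P) (b : B),
      actB (QuotientGroup.mk (p * q)) b =
        actB (QuotientGroup.mk q) (actB (QuotientGroup.mk p) b))
    (φ : X.μ.ker →* B)
    (hφ : ∀ (p : X.P) (a : X.μ.ker),
      φ ⟨X.act p a.1, X.act_ker p a.2⟩ = actB (QuotientGroup.mk p) (φ a)) :
    -- C = {(φ a, i(a)⁻¹) : a ∈ A}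
    let C : Set (B × X.M) := {x | ∃ a : X.μ.ker, x = (φ a, (a : X.M)⁻¹)}
    -- the P-action on B × M
    let act' : X.P → B × X.M → B × X.M :=
      fun p x => (actB (QuotientGroup.mk p) x.1, X.act p x.2)
    -- the boundary μ' on B × M
    let μ' : B × X.M → X.P := fun x => X.μ x.2
    -- C is a subgroup of B × M
    ((1 : B × X.M) ∈ C) ∧
    (∀ x ∈ C, ∀ y ∈ C, x * y ∈ C) ∧
    (∀ x ∈ C, x⁻¹ ∈ C) ∧
    -- C is normal
    (∀ x ∈ C, ∀ g : B × X.M, g * x * g⁻¹ ∈ C) ∧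
    -- μ' descends to (B × M)/C
    (∀ x ∈ C, μ' x = 1) ∧
    -- the action act' descends to (B × M)/C and makes μ' a crossed module:
    (∀ p : X.P, ∀ x ∈ C, act' p x ∈ C) ∧
    (∀ x : B × X.M, act' 1 x = x) ∧
    (∀ (p q : X.P) (x : B × X.M), act' (p * q) x = act' q (act' p x)) ∧
    (∀ (p : X.P) (x y : B × X.M), act' p (x * y) = act' p x * act' p y) ∧
    -- CM1 (on the nose)
    (∀ (p : X.P) (x : B × X.M), μ' (act' p x) = p⁻¹ * μ' x * p) ∧
    -- CM2 (modulo C)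
    (∀ x y : B × X.M, (act' (μ' x) y)⁻¹ * (x⁻¹ * y * x) ∈ C) ∧
    -- ker μ' ≅ B via b ↦ [(b, 1)]
    (∀ b : B, ((b, 1) : B × X.M) ∈ C → b = 1) ∧
    (∀ x : B × X.M, μ' x = 1 → ∃ b : B, x * ((b, (1 : X.M)) : B × X.M)⁻¹ ∈ C) ∧
    -- coker μ' ≅ Q = coker μ
    ({p : X.P | ∃ x : B × X.M, μ' x = p} = (X.μ.range : Set X.P)) ∧
    -- φ' : m ↦ [(1, m)] with id : P → P is a morphism of crossed modules
    (∀ m : X.M, μ' ((1 : B), m) = X.μ m) ∧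
    (∀ m n : X.M, (((1 : B), m * n) : B × X.M) = ((1 : B), m) * ((1 : B), n)) ∧
    (∀ (p : X.P) (m : X.M),
      (act' p ((1 : B), m))⁻¹ * ((1 : B), X.act p m) ∈ C) ∧
    -- which restricts to φ on the kernels
    (∀ a : X.μ.ker, (((1 : B), (a : X.M)) : B × X.M)⁻¹ * (φ a, (1 : X.M)) ∈ C) := by
  intro C act' μ'
  have mem_C : ∀ a : X.μ.ker, ((φ a, (a : X.M)⁻¹) : B × X.M) ∈ C := fun a => ⟨a, rfl⟩
  refine ⟨⟨1, by simp; rfl⟩, ?_, ?_, ?_, ?_, ?_, ?_, ?_, ?_, ?_, ?_, ?_, ?_, ?_, ?_, ?_, ?_, ?_⟩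
  · rintro x ⟨a, rfl⟩ y ⟨a', rfl⟩
    refine ⟨a * a', ?_⟩
    have h : (a : X.M)⁻¹ * (a' : X.M)⁻¹ = (a' : X.M)⁻¹ * (a : X.M)⁻¹ := by
      rw [← mul_inv_rev, X.ker_central a.2 (a' : X.M), mul_inv_rev]
    simp [Prod.ext_iff, h]
  · rintro x ⟨a, rfl⟩
    exact ⟨a⁻¹, by simp⟩
  · rintro x ⟨a, rfl⟩ ⟨b, m⟩
    refine ⟨a, ?_⟩
    have : m * (a : X.M)⁻¹ * m⁻¹ = (a : X.M)⁻¹ := by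
      have := X.ker_central (inv_mem a.2) m
      push_cast at this
      rw [this]; group
    simp [Prod.ext_iff, mul_comm, this]
  · rintro x ⟨a, rfl⟩
    have : X.μ (a : X.M) = 1 := a.2
    simp [μ', this]
  · rintro p x ⟨a, rfl⟩
    refine ⟨⟨X.act p a, X.act_ker p a.2⟩, ?_⟩
    have := hφ p a
    simp [act', Prod.ext_iff, ← this]
  · intro x
    simp [act', X.act_one, ← QuotientGroup.mk_one, actB_one]
  · intro p q x
    simp [act', X.act_mul, ← QuotientGroup.mk_mul, actB_mul]
  · intro p x y
    simp [act', Prod.ext_iff]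
  · intro p x
    simp [act', μ', X.cm1]
  · rintro ⟨b, m⟩ ⟨c, n⟩
    refine ⟨1, ?_⟩
    have h1 : (QuotientGroup.mk (X.μ m) : X.P ⧸ X.μ.range) = QuotientGroup.mk 1 :=
      QuotientGroup.eq.mpr (by simpa using inv_mem ⟨m, rfl⟩)
    have h2 : X.act (X.μ m) n = m⁻¹ * n * m := X.cm2 m n
    have e1 : (actB (QuotientGroup.mk (X.μ m)) c)⁻¹ * (b⁻¹ * c * b) = 1 := by
      rw [h1, actB_one, mul_comm b⁻¹ c]; group
    have e2 : (X.act (X.μ m) n)⁻¹ * (m⁻¹ * n * m) = 1 := by rw [h2]; group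
    refine Prod.ext ?_ ?_
    · simpa [act', μ'] using e1
    · simpa [act', μ'] using e2
  · rintro b ⟨a, ha⟩
    rw [Prod.mk.injEq] at ha
    have : a = 1 := by
      ext; simp [inv_eq_one.mp ha.2.symm]
    rw [ha.1, this, map_one]
  · rintro ⟨c, m⟩ hm
    have hm' : m ∈ X.μ.ker := hm
    refine ⟨c * φ ⟨m, hm'⟩, ⟨(⟨m, hm'⟩ : X.μ.ker)⁻¹, ?_⟩⟩
    simp [Prod.ext_iff, mul_comm]
  · ext p
    constructor
    · rintro ⟨x, rfl⟩; exact ⟨x.2, rfl⟩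
    · rintro ⟨m, rfl⟩; exact ⟨(1, m), rfl⟩
  · intro m; rfl
  · intro m n; simp [Prod.ext_iff]
  · intro p m
    refine ⟨1, ?_⟩
    simp [act', Prod.ext_iff]
  · intro a
    refine ⟨a, ?_⟩
    simp [Prod.ext_iff]
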